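/- Let n ≥ 3 and r with 0 < r ≤ n - 2, and let M be an n×n positive reciprocal matrix with Koczkodaj inconsistency index K(M) < 1 - (1 + √(1 + 4(n-1)(n-r-2)))/(2(n-1)). Let k = n - r, define the k×k matrix A by a_ii = 1 and a_ij = -m_ij/(n-1) for i ≠ j, and let b ∈ ℝᵏ be any entrywise strictly positive vector. Then the system Aμ = b has a unique solution μ, and μ is entrywise strictly positive. -/

import Mathlib

noncomputable def kocz {ι : Type*} [Fintype ι] (M : Matrix ι ι ℝ) : ℝ :=
  sSup {x | ∃ i j k : ι, i ≠ j ∧ j ≠ k ∧ i ≠ k ∧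
    x = min |1 - M i j / (M i k * M k j)| |1 - M i k * M k j / (M i j)|}

set_option maxHeartbeats 1000000 in
theorem stmt14 (n r : ℕ) (hn : 3 ≤ n) (hr : 0 < r) (hrn : r ≤ n - 2)
    (M : Matrix (Fin n) (Fin n) ℝ)
    (hpos : ∀ i j, 0 < M i j) (hrec : ∀ i j, M j i = 1 / M i j)
    (hK : kocz M <
      1 - (1 + Real.sqrt (1 + 4 * ((n : ℝ) - 1) * ((n : ℝ) - r - 2))) / (2 * ((n : ℝ) - 1)))
    (A : Matrix (Fin (n - r)) (Fin (n - r)) ℝ)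
    (hA : ∀ i j : Fin (n - r), A i j =
      if i = j then 1
      else -(M (Fin.castLE (Nat.sub_le n r) i) (Fin.castLE (Nat.sub_le n r) j)) / ((n : ℝ) - 1))
    (b : Fin (n - r) → ℝ) (hb : ∀ i, 0 < b i) :
    (∃! μ, A.mulVec μ = b) ∧ ∀ μ, A.mulVec μ = b → ∀ i, 0 < μ i := by
  have hrn' : r ≤ n := by omega
  have hk2 : 2 ≤ n - r := by omega
  have hn3 : (3:ℝ) ≤ (n:ℝ) := by exact_mod_cast hn
  have hrc : (r:ℝ) + 2 ≤ (n:ℝ) := by exact_mod_cast (by omega : r + 2 ≤ n)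
  set N : ℝ := (n:ℝ) - 1 with hNdef
  have hN2 : (2:ℝ) ≤ N := by simp only [hNdef]; linarith
  have hN0 : (0:ℝ) < N := by linarith
  set s : ℝ := Real.sqrt (1 + 4 * N * ((n : ℝ) - r - 2)) with hsdef
  set α : ℝ := (1 + s) / (2 * N) with hαdef
  have harg : (1:ℝ) ≤ 1 + 4 * N * ((n : ℝ) - r - 2) := by nlinarith
  have hs1 : (1:ℝ) ≤ s := by
    rw [hsdef]
    calc (1:ℝ) = Real.sqrt 1 := Real.sqrt_one.symm
    _ ≤ _ := Real.sqrt_le_sqrt harg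
  have hs2 : s ^ 2 = 1 + 4 * N * ((n : ℝ) - r - 2) := Real.sq_sqrt (by linarith)
  have hα0 : (0:ℝ) < α := div_pos (by linarith) (by linarith)
  have hquad : N * α ^ 2 = α + ((n:ℝ) - r - 2) := by
    rw [hαdef]; field_simp; nlinarith [hs2]
  -- kocz facts
  have hbdd : BddAbove {x | ∃ i j k : Fin n, i ≠ j ∧ j ≠ k ∧ i ≠ k ∧
      x = min |1 - M i j / (M i k * M k j)| |1 - M i k * M k j / (M i j)|} := by
    refine ⟨1, ?_⟩
    rintro x ⟨i, j, l, hij, hjl, hil, rfl⟩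
    have hp := hpos i j
    have hq : 0 < M i l * M l j := mul_pos (hpos i l) (hpos l j)
    rcases le_total (M i j) (M i l * M l j) with h | h
    · refine min_le_of_left_le ?_
      have h1 : M i j / (M i l * M l j) ≤ 1 := (div_le_one hq).mpr h
      have h2 : 0 < M i j / (M i l * M l j) := div_pos hp hq
      rw [abs_of_nonneg (by linarith)]; linarith
    · refine min_le_of_right_le ?_
      have h1 : M i l * M l j / M i j ≤ 1 := (div_le_one hp).mpr h
      have h2 : 0 < M i l * M l j / M i j := div_pos hq hp
      rw [abs_of_nonneg (by linarith)]; linarith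
  have hmem : ∀ i j l : Fin n, i ≠ j → j ≠ l → i ≠ l →
      min |1 - M i j / (M i l * M l j)| |1 - M i l * M l j / (M i j)| ≤ kocz M :=
    fun i j l h1 h2 h3 => le_csSup hbdd ⟨i, j, l, h1, h2, h3, rfl⟩
  have hK' : kocz M < 1 - α := hK
  have hα1 : α < 1 := by
    have h0 := hmem ⟨0, by omega⟩ ⟨1, by omega⟩ ⟨2, by omega⟩
      (by simp [Fin.ext_iff]) (by simp [Fin.ext_iff]) (by simp [Fin.ext_iff])
    have h1 : (0:ℝ) ≤ min |1 - M ⟨0, by omega⟩ ⟨1, by omega⟩ /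
        (M ⟨0, by omega⟩ ⟨2, by omega⟩ * M ⟨2, by omega⟩ ⟨1, by omega⟩)|
        |1 - M ⟨0, by omega⟩ ⟨2, by omega⟩ * M ⟨2, by omega⟩ ⟨1, by omega⟩ /
        (M ⟨0, by omega⟩ ⟨1, by omega⟩)| := le_min (abs_nonneg _) (abs_nonneg _)
    linarith
  have htriad : ∀ i j l : Fin n, i ≠ j → j ≠ l → i ≠ l →
      M i l * M l j < M i j / α := by
    intro i j l hij hjl hil
    have h := lt_of_le_of_lt (hmem i j l hij hjl hil) hK'
    have hp := hpos i j
    have hq : 0 < M i l * M l j := mul_pos (hpos i l) (hpos l j)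
    rw [lt_div_iff₀ hα0]
    rcases min_lt_iff.mp h with h | h
    · have h' := (abs_lt.mp h).2
      have h2 : α < M i j / (M i l * M l j) := by linarith
      have := (lt_div_iff₀ hq).mp h2
      linarith
    · have h' := (abs_lt.mp h).1
      have h2 : M i l * M l j / M i j < 2 - α := by linarith
      have h3 : M i l * M l j < (2 - α) * M i j := (div_lt_iff₀ hp).mp h2
      nlinarith [sq_nonneg (1 - α)]
  -- constants
  set Kr : ℝ := ((n - r : ℕ) : ℝ) with hKrdef
  have hKreq : Kr = (n:ℝ) - r := by rw [hKrdef, Nat.cast_sub hrn']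
  have hKr2 : (2:ℝ) ≤ Kr := by rw [hKrdef]; exact_mod_cast hk2
  have h1r : (1:ℝ) ≤ (r:ℝ) := by exact_mod_cast hr
  have hKrN : Kr ≤ N := by rw [hKreq, hNdef]; linarith
  set β : ℝ := (Kr - 2) / (N * α) with hβdef
  set γ : ℝ := Kr / N ^ 2 with hγdef
  have hβeq : β = α - 1 / N := by
    rw [hβdef, show Kr - 2 = N * α ^ 2 - α by rw [hKreq]; linarith [hquad]]
    field_simp
  have hβ0 : 0 ≤ β := div_nonneg (by linarith) (by positivity)
  have hγ0 : 0 ≤ γ := by positivity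
  have hγN : γ ≤ 1 / N := by
    rw [hγdef, show (1:ℝ)/N = N / N^2 by field_simp]
    gcongr
  have hβγ : β + γ < 1 := by rw [hβeq]; linarith
  set η : ℝ := 1 - β - γ with hηdef
  have hη0 : 0 < η := by rw [hηdef]; linarith
  set t : ℝ := min (η / 3) (1 / 2) with htdef
  have ht0 : 0 < t := lt_min (by linarith) (by norm_num)
  have htη : t ≤ η / 3 := min_le_left _ _
  have ht2 : t ≤ 1 / 2 := min_le_right _ _
  set θ : ℝ := 1 - t with hθdef
  have hθhalf : 1 / 2 ≤ θ := by rw [hθdef]; linarith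
  have hθ1 : θ < 1 := by rw [hθdef]; linarith
  set δ : ℝ := θ - β with hδdef
  have hγθδ : γ ≤ θ * δ := by
    rw [hθdef, hδdef, hθdef]
    nlinarith [sq_nonneg t, mul_nonneg ht0.le hβ0]
  have hδ0 : 0 < δ := by nlinarith
  -- the matrix C
  set e : Fin (n - r) → Fin n := Fin.castLE (Nat.sub_le n r) with hedef
  have hediff : ∀ {i j : Fin (n - r)}, i ≠ j → e i ≠ e j := by
    intro i j h hc
    apply h
    rw [hedef] at hc
    exact Fin.castLE_injective _ hc
  set C : Matrix (Fin (n - r)) (Fin (n - r)) ℝ :=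
    fun i j => if i = j then 0 else M (e i) (e j) / N with hCdef
  have hCd : ∀ i, C i i = 0 := fun i => by simp [hCdef]
  have hCoff : ∀ i j, i ≠ j → C i j = M (e i) (e j) / N := fun i j h => by simp [hCdef, h]
  have hCnn : ∀ i j, 0 ≤ C i j := by
    intro i j
    by_cases h : i = j
    · simp [hCdef, h]
    · rw [hCoff i j h]; exact div_nonneg (hpos _ _).le hN0.le
  have hmulVec : ∀ (μ : Fin (n - r) → ℝ) i, A.mulVec μ i = μ i - ∑ j, C i j * μ j := by
    intro μ i
    have hAe : ∀ j, A i j = (if i = j then (1:ℝ) else 0) - C i j := by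
      intro j
      rw [hA]
      by_cases h : i = j
      · simp [hCdef, h]
      · simp [hCdef, h]; ring
    calc A.mulVec μ i = ∑ j, A i j * μ j := by simp [Matrix.mulVec, dotProduct]
    _ = ∑ j, ((if i = j then (1:ℝ) else 0) * μ j - C i j * μ j) := by
        refine Finset.sum_congr rfl fun j _ => ?_; rw [hAe j]; ring
    _ = (∑ j, (if i = j then (1:ℝ) else 0) * μ j) - ∑ j, C i j * μ j :=
        Finset.sum_sub_distrib _ _
    _ = μ i - ∑ j, C i j * μ j := by
        congr 1
        simp [ite_mul]
  have hMrec : ∀ i j : Fin n, M i j * M j i = 1 := by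
    intro i j
    rw [hrec i j, mul_one_div]
    exact div_self (hpos i j).ne'
  -- entrywise bound on C^2
  have hC2 : ∀ i l, (∑ j, C i j * C j l) ≤ (if i = l then γ else β * C i l) := by
    intro i l
    by_cases hil : i = l
    · subst hil
      simp only [if_pos rfl]
      have hbound : ∀ j ∈ Finset.univ, C i j * C j i ≤ 1 / N ^ 2 := by
        intro j _
        by_cases h : j = i
        · rw [h, hCd i, zero_mul]; positivity
        · rw [hCoff i j (Ne.symm h), hCoff j i h]
          rw [div_mul_div_comm, hMrec (e i) (e j)]
          rw [show N * N = N ^ 2 by ring]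
      calc (∑ j, C i j * C j i) ≤ Finset.univ.card • (1 / N ^ 2) :=
            Finset.sum_le_card_nsmul _ _ _ hbound
      _ = γ := by
            simp only [Finset.card_univ, Fintype.card_fin, nsmul_eq_mul]
            rw [hγdef, hKrdef]; ring
    · rw [if_neg hil]
      have e1 : ∑ j ∈ (Finset.univ.erase i).erase l, C i j * C j l
          = ∑ j ∈ Finset.univ.erase i, C i j * C j l :=
        Finset.sum_erase _ (by rw [hCd l, mul_zero])
      have e2 : ∑ j ∈ Finset.univ.erase i, C i j * C j l
          = ∑ j, C i j * C j l :=
        Finset.sum_erase _ (by rw [hCd i, zero_mul])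
      have h1 : (∑ j, C i j * C j l) = ∑ j ∈ (Finset.univ.erase i).erase l, C i j * C j l :=
        (e1.trans e2).symm
      have hbound : ∀ j ∈ (Finset.univ.erase i).erase l,
          C i j * C j l ≤ M (e i) (e l) / α / N ^ 2 := by
        intro j hj
        have hjl : j ≠ l := Finset.ne_of_mem_erase hj
        have hji : j ≠ i := Finset.ne_of_mem_erase (Finset.mem_of_mem_erase hj)
        have ht := htriad (e i) (e l) (e j) (hediff hil) (hediff (Ne.symm hjl))
          (hediff (fun h => hji (h.symm)))
        calc C i j * C j l = (M (e i) (e j) * M (e j) (e l)) / N ^ 2 := by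
              rw [hCoff i j (Ne.symm hji), hCoff j l hjl, div_mul_div_comm,
                show N * N = N ^ 2 by ring]
        _ ≤ (M (e i) (e l) / α) / N ^ 2 := by
              gcongr
        _ = M (e i) (e l) / α / N ^ 2 := rfl
      have hcard : ((Finset.univ.erase i).erase l).card = n - r - 2 := by
        rw [Finset.card_erase_of_mem (Finset.mem_erase.mpr ⟨Ne.symm hil, Finset.mem_univ l⟩),
          Finset.card_erase_of_mem (Finset.mem_univ i), Finset.card_univ, Fintype.card_fin]
        omega
      calc (∑ j, C i j * C j l)
          = ∑ j ∈ (Finset.univ.erase i).erase l, C i j * C j l := h1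
      _ ≤ ((Finset.univ.erase i).erase l).card • (M (e i) (e l) / α / N ^ 2) :=
          Finset.sum_le_card_nsmul _ _ _ hbound
      _ = β * C i l := by
          rw [hcard, nsmul_eq_mul, hCoff i l hil, hβdef]
          have : ((n - r - 2 : ℕ) : ℝ) = Kr - 2 := by
            rw [hKrdef]; push_cast [Nat.cast_sub hk2]; ring
          rw [this, div_div, mul_div_assoc', div_mul_div_comm]
          congr 1
          ring
  -- weight vector
  have hwex : ∃ w : Fin (n - r) → ℝ, (∀ i, 0 < w i) ∧
      ∀ i, (∑ j, C i j * w j) ≤ θ * w i := by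
    refine ⟨fun i => (∑ j, C i j) + δ, fun i => ?_, fun i => ?_⟩
    · have h : 0 ≤ ∑ j, C i j := Finset.sum_nonneg fun j _ => hCnn i j
      dsimp only
      linarith only [h, hδ0]
    · dsimp only
      have hS0 : 0 ≤ ∑ j, C i j := Finset.sum_nonneg fun j _ => hCnn i j
      have e1 : (∑ j, C i j * ((∑ l, C j l) + δ))
          = (∑ l, ∑ j, C i j * C j l) + δ * ∑ j, C i j := by
        calc (∑ j, C i j * ((∑ l, C j l) + δ))
            = ∑ j, ((∑ l, C i j * C j l) + δ * C i j) := by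
              refine Finset.sum_congr rfl fun j _ => ?_
              rw [mul_add, Finset.mul_sum]
              ring
        _ = (∑ j, ∑ l, C i j * C j l) + δ * ∑ j, C i j := by
              rw [Finset.sum_add_distrib, Finset.mul_sum]
        _ = (∑ l, ∑ j, C i j * C j l) + δ * ∑ j, C i j := by rw [Finset.sum_comm]
      have e2 : (∑ l, ∑ j, C i j * C j l) ≤ ∑ l, (if i = l then γ else β * C i l) :=
        Finset.sum_le_sum fun l _ => hC2 i l
      have e3 : (∑ l, (if i = l then γ else β * C i l)) = γ + β * ∑ l, C i l := by
        rw [← Finset.add_sum_erase _ _ (Finset.mem_univ i), if_pos rfl]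
        congr 1
        have h : (∑ l ∈ Finset.univ.erase i, (if i = l then γ else β * C i l))
            = ∑ l ∈ Finset.univ.erase i, β * C i l := by
          refine Finset.sum_congr rfl fun l hl => ?_
          rw [if_neg (Ne.symm (Finset.ne_of_mem_erase hl))]
        rw [h, ← Finset.mul_sum, Finset.sum_erase _ (hCd i)]
      have hβδθ : β + δ = θ := by rw [hδdef]; ring
      calc (∑ j, C i j * ((∑ l, C j l) + δ))
          = (∑ l, ∑ j, C i j * C j l) + δ * ∑ j, C i j := e1
      _ ≤ (γ + β * ∑ l, C i l) + δ * ∑ j, C i j := by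
            rw [← e3]; linarith only [e2]
      _ = γ + (β + δ) * ∑ j, C i j := by ring
      _ ≤ θ * δ + θ * ∑ j, C i j := by
            rw [hβδθ]; linarith only [hγθδ, hS0]
      _ = θ * ((∑ j, C i j) + δ) := by ring
  obtain ⟨w, hw0, hkey⟩ := hwex
  -- core positivity lemma
  have hcore : ∀ (μ c : Fin (n - r) → ℝ), A.mulVec μ = c →
      ((∀ i, 0 ≤ c i) → ∀ i, 0 ≤ μ i) ∧ ((∀ i, 0 < c i) → ∀ i, 0 < μ i) := by
    intro μ c hμc
    have hne : (Finset.univ : Finset (Fin (n - r))).Nonempty :=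
      ⟨⟨0, by omega⟩, Finset.mem_univ _⟩
    obtain ⟨i0, -, hi0⟩ := Finset.exists_min_image Finset.univ (fun i => μ i / w i) hne
    set m : ℝ := μ i0 / w i0 with hmdef
    have hlb : ∀ j, m * w j ≤ μ j := by
      intro j
      exact (le_div_iff₀ (hw0 j)).mp (hi0 j (Finset.mem_univ j))
    have heq : μ i0 = (∑ j, C i0 j * μ j) + c i0 := by
      have h := congrFun hμc i0
      rw [hmulVec] at h
      linarith only [h]
    have h4 : μ i0 = m * w i0 := by
      rw [hmdef, div_mul_cancel₀ _ (hw0 i0).ne']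
    have hkey2 : m ≤ 0 → c i0 ≤ m * ((1 - θ) * w i0) := by
      intro hm
      have h1 : (∑ j, C i0 j * (m * w j)) ≤ ∑ j, C i0 j * μ j :=
        Finset.sum_le_sum fun j _ => mul_le_mul_of_nonneg_left (hlb j) (hCnn i0 j)
      have h2 : (∑ j, C i0 j * (m * w j)) = m * ∑ j, C i0 j * w j := by
        rw [Finset.mul_sum]
        exact Finset.sum_congr rfl fun j _ => by ring
      have h3 : m * (θ * w i0) ≤ m * ∑ j, C i0 j * w j :=
        mul_le_mul_of_nonpos_left (hkey i0) hm
      have h5 : m * ((1 - θ) * w i0) = m * w i0 - m * (θ * w i0) := by ring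
      linarith only [h1, h2, h3, h4, h5, heq]
    constructor
    · intro hc i
      have hm0 : 0 ≤ m := by
        by_contra hcon
        push_neg at hcon
        have h5 := hkey2 hcon.le
        have h7 : 0 < (1 - θ) * w i0 := mul_pos (by linarith only [hθ1]) (hw0 i0)
        have h8 : m * ((1 - θ) * w i0) < 0 := mul_neg_of_neg_of_pos hcon h7
        linarith only [h5, h8, hc i0]
      have h9 := hlb i
      have h10 : 0 ≤ m * w i := mul_nonneg hm0 (hw0 i).le
      linarith only [h9, h10]
    · intro hc i
      have hm0 : 0 < m := by
        by_contra hcon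
        push_neg at hcon
        have h5 := hkey2 hcon
        have h7 : 0 ≤ (1 - θ) * w i0 := mul_nonneg (by linarith only [hθ1]) (hw0 i0).le
        have h8 : m * ((1 - θ) * w i0) ≤ 0 := mul_nonpos_iff.mpr (Or.inr ⟨hcon, h7⟩)
        linarith only [h5, h8, hc i0]
      exact lt_of_lt_of_le (mul_pos hm0 (hw0 i)) (hlb i)
  -- injectivity and conclusion
  have hker : ∀ μ, A.mulVec μ = 0 → μ = 0 := by
    intro μ h
    have h1 := (hcore μ 0 h).1 (fun i => le_refl 0)
    have h2 : A.mulVec (-μ) = 0 := by rw [Matrix.mulVec_neg, h, neg_zero]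
    have h3 := (hcore (-μ) 0 h2).1 (fun i => le_refl 0)
    funext i
    have h5 := h3 i
    simp only [Pi.neg_apply, Pi.zero_apply] at h5 ⊢
    have h6 := h1 i
    linarith only [h5, h6]
  have hinj : Function.Injective A.mulVecLin := by
    intro x y hxy
    have h : A.mulVec (x - y) = 0 := by
      rw [Matrix.mulVec_sub]
      simp only [Matrix.mulVecLin_apply] at hxy
      rw [hxy, sub_self]
    exact sub_eq_zero.mp (hker _ h)
  have hsurj : Function.Surjective A.mulVecLin :=
    LinearMap.injective_iff_surjective.mp hinj
  obtain ⟨μ0, hμ0⟩ := hsurj b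
  rw [Matrix.mulVecLin_apply] at hμ0
  refine ⟨⟨μ0, hμ0, ?_⟩, ?_⟩
  · intro y hy
    apply hinj
    rw [Matrix.mulVecLin_apply, Matrix.mulVecLin_apply, hy, hμ0]
  · intro μ hμ i
    exact (hcore μ b hμ).2 hb i
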